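/- For every function f : 𝔹^N → 𝔹^N, the map G_f has sensitive dependence on initial conditions on (𝒳, d): there exists δ > 0 such that for any X ∈ 𝒳 and any neighborhood V of X, there exist Y ∈ V and n > 0 with d(G_f^n(X), G_f^n(Y)) > δ. -/

import Mathlib

open scoped BigOperators

/-- Hamming distance `d_e` on `𝔹^N`: the number of coordinates where `E` and `F` differ. -/
noncomputable def deH (N : ℕ) (E F : Fin N → Bool) : ℝ :=
  ((Finset.univ.filter fun i => E i ≠ F i).card : ℝ)

/-- The distance `d_s` on general strategies `𝒫(⟦1,N⟧)^ℕ`: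
`d_s(S,Š) = (9/N) Σ_{k=1}^{∞} |S^k Δ Š^k| / 10^k` (sequences are indexed from 0 here,
so the `k`-th term of the sequence gets weight `10^{-(k+1)}`). -/
noncomputable def dsG (N : ℕ) (S T : ℕ → Finset (Fin N)) : ℝ :=
  (9 / (N : ℝ)) * ∑' k : ℕ, ((symmDiff (S k) (T k)).card : ℝ) / 10 ^ (k + 1)

/-- The distance `d` on the phase space `𝒳 = 𝒫(⟦1,N⟧)^ℕ × 𝔹^N`. -/
noncomputable def dX (N : ℕ)
    (X Y : (ℕ → Finset (Fin N)) × (Fin N → Bool)) : ℝ :=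
  deH N X.2 Y.2 + dsG N X.1 Y.1

/-- `F_f(P,E)_j = f(E)_j` if `j ∈ P`, and `E_j` otherwise. -/
def Ff (N : ℕ) (f : (Fin N → Bool) → (Fin N → Bool)) (P : Finset (Fin N))
    (E : Fin N → Bool) : Fin N → Bool :=
  fun j => if j ∈ P then f E j else E j

/-- `G_f(S,E) = (σ(S), F_f(S^0,E))`, where `σ` is the shift. -/
def Gf (N : ℕ) (f : (Fin N → Bool) → (Fin N → Bool)) :
    (ℕ → Finset (Fin N)) × (Fin N → Bool) → (ℕ → Finset (Fin N)) × (Fin N → Bool) :=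
  fun X => (fun n => X.1 (n + 1), Ff N f (X.1 0) X.2)

lemma Gf_iter_fst (N : ℕ) (f : (Fin N → Bool) → (Fin N → Bool)) (n : ℕ)
    (X : (ℕ → Finset (Fin N)) × (Fin N → Bool)) :
    ((Gf N f)^[n] X).1 = fun j => X.1 (j + n) := by
  induction n generalizing X with
  | zero => simp
  | succ n ih =>
    rw [Function.iterate_succ_apply, ih]
    funext j
    simp [Gf, Nat.add_assoc, Nat.add_comm 1 n]

lemma Gf_iter_snd (N : ℕ) (f : (Fin N → Bool) → (Fin N → Bool)) (n : ℕ)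
    (X Y : (ℕ → Finset (Fin N)) × (Fin N → Bool))
    (hE : X.2 = Y.2) (hS : ∀ j < n, X.1 j = Y.1 j) :
    ((Gf N f)^[n] X).2 = ((Gf N f)^[n] Y).2 := by
  induction n generalizing X Y with
  | zero => simpa
  | succ n ih =>
    rw [Function.iterate_succ_apply, Function.iterate_succ_apply]
    apply ih
    · simp only [Gf, hE, hS 0 (Nat.succ_pos n)]
    · intro j hj
      simp only [Gf]
      exact hS (j + 1) (by omega)

/-- For every function `f : 𝔹^N → 𝔹^N`, the map `G_f` has sensitive
dependence on initial conditions on `(𝒳, d)`: there exists `δ > 0` such that for any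
`X ∈ 𝒳` and any neighborhood `V` of `X` (equivalently, any open ball around `X`),
there exist `Y ∈ V` and `n > 0` with `d(G_f^n(X), G_f^n(Y)) > δ`. -/
theorem Gf_sensitive_dependence (N : ℕ) (hN : 0 < N)
    (f : (Fin N → Bool) → (Fin N → Bool)) :
    ∃ δ : ℝ, 0 < δ ∧
      ∀ X : (ℕ → Finset (Fin N)) × (Fin N → Bool), ∀ ε : ℝ, 0 < ε →
        ∃ Y : (ℕ → Finset (Fin N)) × (Fin N → Bool), dX N X Y < ε ∧
          ∃ n : ℕ, 0 < n ∧ δ < dX N ((Gf N f)^[n] X) ((Gf N f)^[n] Y) := by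
  refine ⟨1/2, by norm_num, fun X ε hε => ?_⟩
  -- choose k ≥ 1 with 9/10^(k+1) < ε
  obtain ⟨m, hm⟩ := pow_unbounded_of_one_lt (9/ε) (by norm_num : (1:ℝ) < 10)
  set k := m + 1 with hk
  have hk1 : (9:ℝ) / 10 ^ (k + 1) < ε := by
    rw [div_lt_iff₀ (by positivity)]
    have h10 : (9:ℝ)/ε < 10 ^ k := lt_of_lt_of_le hm (by
      apply pow_le_pow_right₀ (by norm_num); omega)
    have := (div_lt_iff₀ hε).mp h10
    calc (9:ℝ) < 10 ^ k * ε := this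
      _ ≤ ε * 10 ^ (k+1) := by
          rw [mul_comm]
          exact mul_le_mul_of_nonneg_left
            (pow_le_pow_right₀ (by norm_num) (Nat.le_succ k)) hε.le
  set Y : (ℕ → Finset (Fin N)) × (Fin N → Bool) :=
    (fun j => if j = k then (X.1 k)ᶜ else X.1 j, X.2) with hY
  have hcard : ((symmDiff (X.1 k) (X.1 k)ᶜ).card : ℝ) = N := by
    rw [symmDiff_compl_self]
    simp [Finset.top_eq_univ]
  have hNne : (N:ℝ) ≠ 0 := Nat.cast_ne_zero.mpr hN.ne'
  refine ⟨Y, ?_, k, by omega, ?_⟩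
  · -- dX X Y < ε
    have h1 : deH N X.2 Y.2 = 0 := by simp [deH, hY]
    have h2 : dsG N X.1 Y.1 = 9 / 10 ^ (k+1) := by
      rw [dsG]
      rw [tsum_eq_single k]
      · simp only [hY, if_pos rfl, if_true, hcard]
        field_simp
      · intro b hb
        simp [hY, hb, symmDiff_self]
    rw [dX, h1, h2, zero_add]
    exact hk1
  · -- far apart after k steps
    have h1 : deH N ((Gf N f)^[k] X).2 ((Gf N f)^[k] Y).2 = 0 := by
      rw [Gf_iter_snd N f k X Y rfl (by intro j hj; simp [hY, hj.ne])]
      simp [deH]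
    have h2 : dsG N ((Gf N f)^[k] X).1 ((Gf N f)^[k] Y).1 = 9/10 := by
      rw [Gf_iter_fst, Gf_iter_fst, dsG, tsum_eq_single 0]
      · simp only [Nat.zero_add, if_pos rfl, if_true, hcard, hY]
        field_simp
      · intro b hb
        have : b + k ≠ k := by omega
        simp [hY, this, hb, symmDiff_self]
    rw [dX, h1, h2, zero_add]
    norm_num
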